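/- There exists a constant C depending only on d̄ such that the following holds for every integer N ≥ 2|d̄|. Let φ, Y: [0,1] × 𝕋_N → ℝ be bounded measurable with sup |φ| ≤ 1 and sup |Y| ≤ N^{ε_ap}, and define G(T,x) = ∫_{max(T − N^{−1/2−999ε_RN}, 0)}^{T} Σ_{y∈𝕋_N} H^N_{S,T,x,y} · N^{1/2} · φ(S,y) · Y(S,y) dS. Then sup_{(T,x)∈[0,1]×𝕋_N} sup_{ℓ∈ℤ, 1≤|ℓ|≤N^{1/2+ε_RN}} |ℓ|^{−1} |G(T,x+ℓ) − G(T,x)| ≤ C · N^{−3/4 − (999/2)ε_RN + ε_ap}. -/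

import Mathlib

open MeasureTheory

/-- The generator matrix `L_N` of the discrete heat flow with drift: acting on a function
`φ : ZMod N → ℝ` (as `mulVec`), it gives
`L_N φ (x) = (N²/2)(φ(x+1) + φ(x−1) − 2φ(x)) + d̄·N·(φ(x−1) − φ(x))`. -/
noncomputable def genMat (N : ℕ) (dbar : ℝ) : Matrix (ZMod N) (ZMod N) ℝ :=
  Matrix.of fun x y =>
    ((N : ℝ) ^ 2 / 2) * ((if y = x + 1 then 1 else 0) + (if y = x - 1 then 1 else 0))
      + dbar * (N : ℝ) * (if y = x - 1 then 1 else 0)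
      - ((N : ℝ) ^ 2 + dbar * (N : ℝ)) * (if y = x then 1 else 0)

/-- The discrete heat kernel `H^N_{S,T,x,y}`: the `(x,y)` entry of `exp((T−S)·L_N)`. -/
noncomputable def heatKer (N : ℕ) [NeZero N] (dbar : ℝ) (S T : ℝ) (x y : ZMod N) : ℝ :=
  NormedSpace.exp ((T - S) • genMat N dbar) x y

/-- The space-time heat operator `H^N_{T,x}(φ) = ∫_0^T Σ_y H^N_{S,T,x,y} φ(S,y) dS`. -/
noncomputable def heatOp (N : ℕ) [NeZero N] (dbar : ℝ) (φ : ℝ → ZMod N → ℝ)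
    (T : ℝ) (x : ZMod N) : ℝ :=
  ∫ S in (0:ℝ)..T, ∑ y : ZMod N, heatKer N dbar S T x y * φ S y

/-- The constant `ε_RN = 999^{−999}`. -/
noncomputable def epsRN : ℝ := ((999 : ℝ) ^ (999 : ℕ))⁻¹

noncomputable def pw (a : ℝ) (n : ℕ) : ℝ := a ^ n / n.factorial

lemma pw_nonneg {a : ℝ} (ha : 0 ≤ a) (n : ℕ) : 0 ≤ pw a n := by
  unfold pw; positivity

lemma pw_summable (a : ℝ) (ha : 0 ≤ a) : Summable (pw a) := by
  have := Real.summable_pow_div_factorial a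
  exact this

lemma pw_succ (a : ℝ) (n : ℕ) : pw a (n + 1) = pw a n * (a / (n+1)) := by
  unfold pw
  rw [div_mul_div_comm, ← pow_succ]
  congr 1
  rw [Nat.factorial_succ]
  push_cast
  ring

lemma pw_mono_le {a : ℝ} (ha : 0 ≤ a) {n : ℕ} (h : (n:ℝ) + 1 ≤ a) : pw a n ≤ pw a (n+1) := by
  rw [pw_succ]
  nth_rewrite 1 [← mul_one (pw a n)]
  apply mul_le_mul_of_nonneg_left _ (pw_nonneg ha n)
  rw [le_div_iff₀ (by positivity)]
  linarith

lemma pw_anti {a : ℝ} (ha : 0 ≤ a) {n : ℕ} (h : a ≤ (n:ℝ) + 1) : pw a (n+1) ≤ pw a n := by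
  rw [pw_succ]
  nth_rewrite 2 [← mul_one (pw a n)]
  apply mul_le_mul_of_nonneg_left _ (pw_nonneg ha n)
  rw [div_le_one (by positivity)]
  linarith

/-- shifted weights -/
noncomputable def qw (a : ℝ) (n : ℕ) : ℝ := if n = 0 then 0 else pw a (n - 1)

lemma tv_summable {a : ℝ} (ha : 0 ≤ a) : Summable fun n => |qw a n - pw a n| := by
  apply Summable.abs
  apply Summable.sub _ (pw_summable a ha)
  have h1 : Summable fun n => pw a n := pw_summable a ha
  have : Summable fun n => qw a (n+1) := by
    simpa [qw] using h1
  exact (summable_nat_add_iff 1).mp this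

/-- Total variation of the increment of Poisson weights: telescopes to twice the max. -/
lemma tv_poisson {a : ℝ} (ha : 0 ≤ a) :
    ∑' n : ℕ, |qw a n - pw a n| ≤ 2 * pw a ⌊a⌋₊ := by
  set m := ⌊a⌋₊ with hm
  have hfloor_le : (m : ℝ) ≤ a := Nat.floor_le ha
  have hlt : a < (m : ℝ) + 1 := Nat.lt_floor_add_one a
  rw [← Summable.sum_add_tsum_nat_add (f := fun n => |qw a n - pw a n|) (m+1) (tv_summable ha)]
  have hfirst : ∑ n ∈ Finset.range (m+1), |qw a n - pw a n| = pw a m := by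
    have h1 : ∀ n ∈ Finset.range (m+1), |qw a n - pw a n| = pw a n - qw a n := by
      intro n hn
      rw [Finset.mem_range] at hn
      rw [abs_sub_comm, abs_of_nonneg]
      rcases Nat.eq_zero_or_pos n with h | h
      · subst h; simp [qw, pw_nonneg ha]
      · obtain ⟨k, rfl⟩ := Nat.exists_eq_add_of_lt h
        simp only [qw, Nat.add_sub_cancel, zero_add]
        rw [if_neg (by omega)]
        have hk1 : (k:ℝ) + 1 ≤ a := by
          have : k + 1 ≤ m := by omega
          calc ((k:ℝ)) + 1 ≤ (m:ℝ) := by exact_mod_cast this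
          _ ≤ a := hfloor_le
        have := pw_mono_le ha hk1
        simpa [Nat.add_sub_cancel] using sub_nonneg.mpr this
    rw [Finset.sum_congr rfl h1, Finset.sum_sub_distrib]
    have h2 : ∑ n ∈ Finset.range (m+1), qw a n = ∑ n ∈ Finset.range m, pw a n := by
      rw [Finset.sum_range_succ']
      simp [qw]
    rw [h2, Finset.sum_range_succ]
    ring
  have htail : ∑' k : ℕ, |qw a (k + (m+1)) - pw a (k + (m+1))| = pw a m := by
    have heq : ∀ k : ℕ, |qw a (k + (m+1)) - pw a (k + (m+1))| = pw a (k + m) - pw a (k + m + 1) := by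
      intro k
      have h0 : qw a (k + (m+1)) = pw a (k + m) := by
        simp only [qw, if_neg (by omega : ¬ k + (m+1) = 0)]
        congr 1
      rw [h0, show k + (m+1) = (k+m)+1 by omega, abs_of_nonneg]
      have hle : a ≤ ((k+m:ℕ):ℝ) + 1 := by
        push_cast
        have hk0 : (0:ℝ) ≤ (k:ℝ) := Nat.cast_nonneg k
        linarith
      linarith [pw_anti ha hle]
    rw [tsum_congr heq]
    have hsummable : Summable fun k => pw a (k + m) - pw a (k + m + 1) := by
      apply Summable.sub
      · exact (summable_nat_add_iff m).mpr (pw_summable a ha)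
      · have := (summable_nat_add_iff (m+1)).mpr (pw_summable a ha)
        apply this.congr; intro k; congr 1
    have : HasSum (fun k => pw a (k + m) - pw a (k + m + 1)) (pw a m) := by
      rw [hsummable.hasSum_iff_tendsto_nat]
      have hts : ∀ K : ℕ, ∑ k ∈ Finset.range K, (pw a (k + m) - pw a (k + m + 1))
          = pw a m - pw a (K + m) := by
        intro K
        calc ∑ k ∈ Finset.range K, (pw a (k + m) - pw a (k + m + 1))
            = ∑ k ∈ Finset.range K,
              ((fun j => pw a (j + m)) k - (fun j => pw a (j + m)) (k+1)) := by
              apply Finset.sum_congr rfl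
              intro k _
              simp only
              rw [show k + 1 + m = k + m + 1 from by omega]
        _ = pw a (0 + m) - pw a (K + m) := Finset.sum_range_sub' (fun j => pw a (j + m)) K
        _ = pw a m - pw a (K + m) := by rw [Nat.zero_add]
      simp only [hts]
      have : Filter.Tendsto (fun K : ℕ => pw a (K + m)) Filter.atTop (nhds 0) := by
        exact ((summable_nat_add_iff m).mpr (pw_summable a ha)).tendsto_atTop_zero
      simpa using Filter.Tendsto.sub (tendsto_const_nhds) this
    rw [this.tsum_eq]
  rw [hfirst, htail]
  ring_nf
  exact le_refl _

lemma stirling_lower (m : ℕ) (hm : 1 ≤ m) :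
    Real.sqrt (2*m) * (m / Real.exp 1) ^ m ≤ m.factorial := by
  have h1 : Real.sqrt Real.pi ≤ Stirling.stirlingSeq m := by
    obtain ⟨k, rfl⟩ := Nat.exists_eq_add_of_le hm
    have hmono := Stirling.stirlingSeq'_antitone
    have hlim : Filter.Tendsto (Stirling.stirlingSeq ∘ Nat.succ) Filter.atTop
        (nhds (Real.sqrt Real.pi)) :=
      Stirling.tendsto_stirlingSeq_sqrt_pi.comp (Filter.tendsto_add_atTop_nat 1)
    have := hmono.le_of_tendsto hlim k
    simpa [Nat.succ_eq_add_one, Nat.add_comm] using this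
  have h2 : (1:ℝ) ≤ Real.sqrt Real.pi := by
    rw [show (1:ℝ) = Real.sqrt 1 by simp]
    exact Real.sqrt_le_sqrt (by linarith [Real.pi_gt_three])
  have h3 : (1:ℝ) ≤ Stirling.stirlingSeq m := le_trans h2 h1
  rw [Stirling.stirlingSeq] at h3
  have h4 : (0:ℝ) < Real.sqrt (2*m) * (m / Real.exp 1) ^ m := by
    apply mul_pos
    · apply Real.sqrt_pos.mpr; positivity
    · apply pow_pos; apply div_pos _ (Real.exp_pos 1); exact_mod_cast hm
  rw [le_div_iff₀ h4] at h3
  simpa using h3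

lemma poisson_max {a : ℝ} (ha : 0 < a) :
    Real.exp (-a) * pw a ⌊a⌋₊ ≤ Real.sqrt 2 / Real.sqrt a := by
  have hexp : ∑' n, pw a n = Real.exp a := by
    rw [Real.exp_eq_exp_ℝ]
    rw [NormedSpace.exp_eq_tsum_div]
    rfl
  rcases le_or_gt a 2 with h2 | h2
  · have hle1 : Real.exp (-a) * pw a ⌊a⌋₊ ≤ 1 := by
      have : pw a ⌊a⌋₊ ≤ Real.exp a := by
        rw [← hexp]
        exact Summable.le_tsum (pw_summable a ha.le) _ (fun n _ => pw_nonneg ha.le n)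
      calc Real.exp (-a) * pw a ⌊a⌋₊ ≤ Real.exp (-a) * Real.exp a :=
            mul_le_mul_of_nonneg_left this (Real.exp_pos _).le
      _ = 1 := by rw [← Real.exp_add]; simp
    apply le_trans hle1
    rw [le_div_iff₀ (Real.sqrt_pos.mpr ha)]
    rw [one_mul]
    exact Real.sqrt_le_sqrt h2
  · set m := ⌊a⌋₊ with hmdef
    have hm1 : 1 ≤ m := by
      rw [hmdef]
      have : (1:ℕ) ≤ ⌊a⌋₊ ↔ (1:ℝ) ≤ a := by
        rw [Nat.le_floor_iff ha.le]; norm_num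
      exact this.mpr (by linarith)
    have hma : (m:ℝ) ≤ a := Nat.floor_le ha.le
    have hma2 : a ≤ (m:ℝ) + 1 := (Nat.lt_floor_add_one a).le
    have hmpos : (0:ℝ) < m := by exact_mod_cast hm1
    have hst := stirling_lower m hm1
    have hkey : Real.exp (-a) * pw a m ≤ 1 / Real.sqrt (2*m) := by
      have hfact_pos : (0:ℝ) < m.factorial := by exact_mod_cast m.factorial_pos
      have hstep1 : pw a m ≤ a^m / (Real.sqrt (2*m) * (m / Real.exp 1) ^ m) := by
        unfold pw
        apply div_le_div_of_nonneg_left (by positivity) (by positivity) hst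
      have hsq : Real.sqrt (2*m) ≠ 0 := ne_of_gt (Real.sqrt_pos.mpr (by positivity))
      have hmmne : ((m:ℝ))^m ≠ 0 := by positivity
      have hstep2 : a^m / (Real.sqrt (2*m) * (m / Real.exp 1) ^ m)
          = (a/m)^m * Real.exp m / Real.sqrt (2*m) := by
        have he1 : ((m:ℝ) / Real.exp 1) ^ m = (m:ℝ)^m / Real.exp m := by
          rw [div_pow, ← Real.exp_nat_mul, mul_one]
        rw [he1, div_pow]
        have hem : Real.exp (m:ℝ) ≠ 0 := (Real.exp_pos _).ne'
        field_simp
      have hstep3 : ((a/m):ℝ)^m ≤ Real.exp (a - m) := by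
        have hx : a/m = 1 + (a-m)/m := by field_simp; ring
        rw [hx]
        have h0 : 0 ≤ (a - m)/m := div_nonneg (by linarith) hmpos.le
        calc (1 + (a-m)/m)^m ≤ (Real.exp ((a-m)/m))^m := by
              apply pow_le_pow_left₀ (by linarith)
              linarith [Real.add_one_le_exp ((a-m)/m)]
        _ = Real.exp ((m:ℝ) * ((a-m)/m)) := (Real.exp_nat_mul _ m).symm
        _ = Real.exp (a - m) := by congr 1; field_simp
      calc Real.exp (-a) * pw a m
          ≤ Real.exp (-a) * ((a/m)^m * Real.exp m / Real.sqrt (2*m)) := by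
            apply mul_le_mul_of_nonneg_left _ (Real.exp_pos _).le
            rw [← hstep2]; exact hstep1
      _ ≤ Real.exp (-a) * (Real.exp (a-m) * Real.exp m / Real.sqrt (2*m)) := by
            gcongr
      _ = 1 / Real.sqrt (2*m) := by
            rw [← Real.exp_add, show a - (m:ℝ) + (m:ℝ) = a by ring, mul_div_assoc',
              ← Real.exp_add]
            simp
    apply le_trans hkey
    have hs : Real.sqrt a ≤ Real.sqrt (2*m) := Real.sqrt_le_sqrt (by linarith)
    rw [div_le_div_iff₀ (Real.sqrt_pos.mpr (by positivity)) (Real.sqrt_pos.mpr ha)]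
    calc 1 * Real.sqrt a ≤ 1 * Real.sqrt (2*m) := by linarith
    _ ≤ Real.sqrt 2 * Real.sqrt (2*m) := by
          nlinarith [Real.sqrt_nonneg (2*(m:ℝ)), Real.one_le_sqrt.mpr (by norm_num : (1:ℝ) ≤ 2)]
noncomputable def shiftMat (N : ℕ) (c : ZMod N) : Matrix (ZMod N) (ZMod N) ℝ :=
  Matrix.of fun x y => if y = x + c then 1 else 0

variable {N : ℕ} [NeZero N]

lemma shiftMat_mul (c d : ZMod N) : shiftMat N c * shiftMat N d = shiftMat N (c + d) := by
  ext x y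
  simp only [Matrix.mul_apply, shiftMat, Matrix.of_apply]
  rw [Finset.sum_eq_single (x + c)]
  · simp [add_assoc]
  · intro b _ hb; simp [hb]
  · simp

lemma shiftMat_pow (c : ZMod N) (n : ℕ) : shiftMat N c ^ n = shiftMat N (n • c) := by
  induction n with
  | zero =>
    ext x y
    simp [shiftMat, Matrix.one_apply, eq_comm]
  | succ n ih =>
    rw [pow_succ, ih, shiftMat_mul, succ_nsmul]

lemma summable_aux (a : ℝ) (f : ℕ → ℝ) (hf : ∀ n, |f n| ≤ 1) :
    Summable fun n : ℕ => a ^ n / n.factorial * f n := by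
  apply Summable.of_norm_bounded (Real.summable_pow_div_factorial |a|)
  intro n
  rw [norm_mul, norm_div]
  calc ‖a ^ n‖ / ‖(n.factorial : ℝ)‖ * ‖f n‖ ≤ |a| ^ n / n.factorial * 1 := by
        apply mul_le_mul _ (hf n) (abs_nonneg _) (by positivity)
        simp [abs_pow]
  _ = |a| ^ n / n.factorial := by ring

lemma exp_smul_shift_apply (a : ℝ) (c : ZMod N) (x y : ZMod N) :
    NormedSpace.exp (a • shiftMat N c) x y
      = ∑' n : ℕ, a ^ n / n.factorial * (if y = x + n • c then 1 else 0) := by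
  have key : ∀ n : ℕ, ((n.factorial : ℝ)⁻¹ • (a • shiftMat N c) ^ n) x y
      = a ^ n / n.factorial * (if y = x + n • c then 1 else 0) := by
    intro n
    rw [smul_pow, shiftMat_pow]
    simp only [Matrix.smul_apply, shiftMat, Matrix.of_apply, smul_eq_mul]
    ring
  have hs : Summable fun n : ℕ => (n.factorial⁻¹ : ℝ) • (a • shiftMat N c) ^ n := by
    refine Pi.summable.mpr fun x' => Pi.summable.mpr fun y' => ?_
    have := summable_aux a (fun n => if y' = x' + n • c then 1 else 0) (by
      intro n; split <;> simp)
    apply this.congr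
    intro n
    rw [smul_pow, shiftMat_pow]
    simp only [Matrix.smul_apply, shiftMat, Matrix.of_apply, smul_eq_mul,
      Pi.smul_apply]
    ring
  have h0 : NormedSpace.exp (a • shiftMat N c)
      = ∑' n : ℕ, (n.factorial⁻¹ : ℝ) • (a • shiftMat N c) ^ n := by
    rw [NormedSpace.exp_eq_tsum ℝ]
  rw [h0]
  have h1 : (∑' n : ℕ, (n.factorial⁻¹ : ℝ) • (a • shiftMat N c) ^ n) x y
      = ∑' n : ℕ, ((n.factorial⁻¹ : ℝ) • (a • shiftMat N c) ^ n) x y := by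
    erw [tsum_apply hs]
    exact tsum_apply (Pi.summable.mp hs x)
  rw [h1]
  exact tsum_congr key





lemma genMat_eq (dbar : ℝ) :
    genMat N dbar = ((N:ℝ)^2/2) • shiftMat N 1 + ((N:ℝ)^2/2 + dbar * N) • shiftMat N (-1)
      + (-((N:ℝ)^2 + dbar * N)) • (1 : Matrix (ZMod N) (ZMod N) ℝ) := by
  ext x y
  simp only [genMat, shiftMat, Matrix.add_apply, Matrix.smul_apply, Matrix.of_apply,
    Matrix.one_apply, smul_eq_mul, sub_eq_add_neg]
  have : (if x = y then (1:ℝ) else 0) = (if y = x then (1:ℝ) else 0) := by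
    simp [eq_comm]
  rw [this]
  ring

lemma commute_aux (c d : ZMod N) (a b : ℝ) : Commute (a • shiftMat N c) (b • shiftMat N d) := by
  unfold Commute SemiconjBy
  rw [Algebra.smul_mul_assoc, Algebra.mul_smul_comm, shiftMat_mul,
    Algebra.smul_mul_assoc, Algebra.mul_smul_comm, shiftMat_mul, add_comm c d, smul_comm]

lemma exp_genMat_eq (dbar : ℝ) (t : ℝ) :
    NormedSpace.exp (t • genMat N dbar)
      = Real.exp (-((N:ℝ)^2 + dbar * N) * t) •
        (NormedSpace.exp ((t * ((N:ℝ)^2/2)) • shiftMat N 1) *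
          NormedSpace.exp ((t * ((N:ℝ)^2/2 + dbar * N)) • shiftMat N (-1))) := by
  rw [genMat_eq, smul_add, smul_add, smul_smul, smul_smul, smul_smul]
  rw [Matrix.exp_add_of_commute, Matrix.exp_add_of_commute]
  · rw [mul_comm t, mul_comm t, mul_comm t]
    have h1 : (-((N:ℝ)^2 + dbar * N) * t) • (1 : Matrix (ZMod N) (ZMod N) ℝ)
        = Matrix.diagonal (fun _ => -((N:ℝ)^2 + dbar * N) * t) := by
      rw [Matrix.smul_one_eq_diagonal]
    rw [h1, Matrix.exp_diagonal]
    ext x y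
    simp only [Matrix.mul_apply, Matrix.diagonal_apply, Matrix.smul_apply, smul_eq_mul]
    rw [Finset.sum_eq_single y]
    · simp [← Real.exp_eq_exp_ℝ, mul_comm]
    · intro b _ hb; simp [hb]
    · simp
  · exact commute_aux _ _ _ _
  · have h0 : (1 : Matrix (ZMod N) (ZMod N) ℝ) = shiftMat N 0 := by
      ext x y
      simp [shiftMat, Matrix.one_apply, eq_comm]
    rw [h0]
    exact Commute.add_left (commute_aux _ _ _ _) (commute_aux _ _ _ _)section D
variable {N : ℕ} [NeZero N]

lemma tsum_pw (a : ℝ) : ∑' n, pw a n = Real.exp a := by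
  rw [Real.exp_eq_exp_ℝ, NormedSpace.exp_eq_tsum_div]
  rfl

lemma exp_shift_apply' (a : ℝ) (c : ZMod N) (x y : ZMod N) :
    NormedSpace.exp (a • shiftMat N c) x y
      = ∑' n : ℕ, pw a n * (if y = x + n • c then 1 else 0) := by
  rw [exp_smul_shift_apply]
  rfl

lemma exp_shift_nonneg {a : ℝ} (ha : 0 ≤ a) (c : ZMod N) (x y : ZMod N) :
    0 ≤ NormedSpace.exp (a • shiftMat N c) x y := by
  rw [exp_shift_apply' a c x y]
  apply tsum_nonneg
  intro n
  have := pw_nonneg ha n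
  positivity

lemma summable_pw_ind {a : ℝ} (f : ℕ → ℝ) (hf : ∀ n, |f n| ≤ 1) :
    Summable fun n : ℕ => pw a n * f n := summable_aux a f hf

lemma exp_shift_rowsum {a : ℝ} (ha : 0 ≤ a) (c : ZMod N) (x : ZMod N) :
    ∑ y : ZMod N, NormedSpace.exp (a • shiftMat N c) x y = Real.exp a := by
  have h1 : ∀ y : ZMod N, NormedSpace.exp (a • shiftMat N c) x y
      = ∑' n : ℕ, pw a n * (if y = x + n • c then 1 else 0) := fun y => exp_shift_apply' a c x y
  rw [Finset.sum_congr rfl (fun y _ => h1 y)]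
  rw [← Summable.tsum_finsetSum (fun y _ => summable_pw_ind _ (by intro n; split <;> simp))]
  rw [← tsum_pw a]
  apply tsum_congr
  intro n
  rw [← Finset.mul_sum]
  rw [Finset.sum_ite_eq' Finset.univ (x + n • c) (fun _ => (1:ℝ))]
  simp
end D
section E
variable {N : ℕ} [NeZero N]

lemma ind_abs_le (z w : ZMod N) : |if z = w then (1:ℝ) else 0| ≤ 1 := by
  split <;> simp

lemma ind_nonneg (z w : ZMod N) : (0:ℝ) ≤ if z = w then (1:ℝ) else 0 := by
  split <;> simp

lemma exp_shift_delta_apply {a : ℝ} (ha : 0 ≤ a) (x z : ZMod N) :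
    NormedSpace.exp (a • shiftMat N 1) (x+1) z - NormedSpace.exp (a • shiftMat N 1) x z
      = ∑' n : ℕ, (qw a n - pw a n) * (if z = x + n • (1:ZMod N) then 1 else 0) := by
  have hsum_p : Summable fun n : ℕ => pw a n * (if z = x + n • (1:ZMod N) then 1 else 0) :=
    summable_pw_ind _ (fun n => ind_abs_le _ _)
  have hGsucc : ∀ n : ℕ, qw a (n+1) * (if z = x + (n+1) • (1:ZMod N) then 1 else 0)
      = pw a n * (if z = (x+1) + n • (1:ZMod N) then 1 else 0) := by
    intro n
    have h1 : qw a (n+1) = pw a n := by simp [qw]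
    have h2 : x + (n+1) • (1:ZMod N) = (x+1) + n • (1:ZMod N) := by
      rw [succ_nsmul]; ring
    rw [h1, h2]
  have hsum_G : Summable fun n : ℕ => qw a n * (if z = x + n • (1:ZMod N) then 1 else 0) := by
    apply (summable_nat_add_iff 1).mp
    apply Summable.congr (summable_pw_ind (a := a)
      (fun n => if z = (x+1) + n • (1:ZMod N) then 1 else 0) (fun n => ind_abs_le _ _))
    intro n
    exact (hGsucc n).symm
  have hG0 : qw a 0 * (if z = x + 0 • (1:ZMod N) then (1:ℝ) else 0) = 0 := by simp [qw]
  have hstep1 : NormedSpace.exp (a • shiftMat N 1) (x+1) z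
      = ∑' n : ℕ, qw a n * (if z = x + n • (1:ZMod N) then 1 else 0) := by
    rw [exp_shift_apply', Summable.tsum_eq_zero_add hsum_G, hG0, zero_add]
    exact tsum_congr fun n => (hGsucc n).symm
  rw [hstep1, exp_shift_apply']
  rw [← Summable.tsum_sub hsum_G hsum_p]
  apply tsum_congr
  intro n
  ring

lemma exp_shift_delta_row {a : ℝ} (ha : 0 ≤ a) (x : ZMod N) :
    ∑ z : ZMod N, |NormedSpace.exp (a • shiftMat N 1) (x+1) z
        - NormedSpace.exp (a • shiftMat N 1) x z| ≤ 2 * pw a ⌊a⌋₊ := by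
  have hsum_abs : ∀ z : ZMod N,
      Summable fun n : ℕ => |qw a n - pw a n| * (if z = x + n • (1:ZMod N) then 1 else 0) := by
    intro z
    apply (tv_summable ha).of_nonneg_of_le
      (fun n => mul_nonneg (abs_nonneg _) (ind_nonneg _ _))
    intro n
    exact mul_le_of_le_one_right (abs_nonneg _) (by split <;> norm_num)
  have habs : ∀ z : ZMod N, |NormedSpace.exp (a • shiftMat N 1) (x+1) z
      - NormedSpace.exp (a • shiftMat N 1) x z|
      ≤ ∑' n : ℕ, |qw a n - pw a n| * (if z = x + n • (1:ZMod N) then 1 else 0) := by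
    intro z
    rw [exp_shift_delta_apply ha x z]
    have hb : ∀ n : ℕ, ‖(qw a n - pw a n) * (if z = x + n • (1:ZMod N) then 1 else 0)‖
        ≤ |qw a n - pw a n| * (if z = x + n • (1:ZMod N) then 1 else 0) := by
      intro n
      rw [Real.norm_eq_abs, abs_mul, abs_of_nonneg (ind_nonneg _ _)]
    calc |∑' n : ℕ, (qw a n - pw a n) * (if z = x + n • (1:ZMod N) then 1 else 0)|
        ≤ ∑' n : ℕ, ‖(qw a n - pw a n) * (if z = x + n • (1:ZMod N) then 1 else 0)‖ :=
          norm_tsum_le_tsum_norm ((hsum_abs z).of_nonneg_of_le (fun n => norm_nonneg _) hb)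
    _ ≤ ∑' n : ℕ, |qw a n - pw a n| * (if z = x + n • (1:ZMod N) then 1 else 0) :=
          Summable.tsum_le_tsum hb ((hsum_abs z).of_nonneg_of_le (fun n => norm_nonneg _) hb) (hsum_abs z)
  calc ∑ z : ZMod N, |NormedSpace.exp (a • shiftMat N 1) (x+1) z
        - NormedSpace.exp (a • shiftMat N 1) x z|
      ≤ ∑ z : ZMod N, ∑' n : ℕ, |qw a n - pw a n| * (if z = x + n • (1:ZMod N) then 1 else 0) :=
        Finset.sum_le_sum fun z _ => habs z
  _ = ∑' n : ℕ, ∑ z : ZMod N, |qw a n - pw a n| * (if z = x + n • (1:ZMod N) then 1 else 0) :=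
        (Summable.tsum_finsetSum fun z _ => hsum_abs z).symm
  _ = ∑' n : ℕ, |qw a n - pw a n| := by
        apply tsum_congr
        intro n
        rw [← Finset.mul_sum, Finset.sum_ite_eq' Finset.univ (x + n • (1:ZMod N)) (fun _ => (1:ℝ))]
        simp
  _ ≤ 2 * pw a ⌊a⌋₊ := tv_poisson ha
end E
section F
variable {N : ℕ} [NeZero N]

lemma beta_nonneg {dbar : ℝ} (hN : 2 * |dbar| ≤ (N:ℝ)) : 0 ≤ (N:ℝ)^2/2 + dbar * N := by
  have h0 : (0:ℝ) ≤ N := Nat.cast_nonneg N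
  have h1 : |dbar| * N ≤ (N:ℝ)^2/2 := by nlinarith [abs_nonneg dbar]
  have h2 : -(|dbar| * N) ≤ dbar * N := by
    have := neg_abs_le dbar
    nlinarith [abs_nonneg dbar]
  linarith

lemma heat_entry_nonneg {dbar t : ℝ} (hN : 2 * |dbar| ≤ (N:ℝ)) (ht : 0 ≤ t) (x y : ZMod N) :
    0 ≤ NormedSpace.exp (t • genMat N dbar) x y := by
  rw [exp_genMat_eq, Matrix.smul_apply, Matrix.mul_apply, smul_eq_mul]
  apply mul_nonneg (Real.exp_pos _).le
  apply Finset.sum_nonneg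
  intro z _
  exact mul_nonneg (exp_shift_nonneg (by positivity) _ _ _)
    (exp_shift_nonneg (mul_nonneg ht (beta_nonneg hN)) _ _ _)

lemma heat_rowsum_one {dbar t : ℝ} (hN : 2 * |dbar| ≤ (N:ℝ)) (ht : 0 ≤ t) (x : ZMod N) :
    ∑ y : ZMod N, NormedSpace.exp (t • genMat N dbar) x y = 1 := by
  have hb := beta_nonneg hN
  simp only [exp_genMat_eq, Matrix.smul_apply, Matrix.mul_apply, smul_eq_mul]
  rw [← Finset.mul_sum, Finset.sum_comm]
  have h1 : ∀ z : ZMod N, ∑ y : ZMod N,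
      NormedSpace.exp ((t * ((N:ℝ)^2/2)) • shiftMat N 1) x z *
        NormedSpace.exp ((t * ((N:ℝ)^2/2 + dbar*N)) • shiftMat N (-1)) z y
      = NormedSpace.exp ((t * ((N:ℝ)^2/2)) • shiftMat N 1) x z
          * Real.exp (t * ((N:ℝ)^2/2 + dbar*N)) := by
    intro z
    rw [← Finset.mul_sum, exp_shift_rowsum (mul_nonneg ht hb)]
  rw [Finset.sum_congr rfl (fun z _ => h1 z), ← Finset.sum_mul,
    exp_shift_rowsum (by positivity)]
  simp only [← Real.exp_add]
  convert Real.exp_zero using 2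
  ring

lemma step_bound {dbar t : ℝ} (hN : 2 * |dbar| ≤ (N:ℝ)) (ht : 0 ≤ t) (x : ZMod N) :
    ∑ y : ZMod N, |NormedSpace.exp (t • genMat N dbar) (x+1) y
        - NormedSpace.exp (t • genMat N dbar) x y|
      ≤ 2 * Real.exp (-(t * ((N:ℝ)^2/2))) * pw (t * ((N:ℝ)^2/2)) ⌊t * ((N:ℝ)^2/2)⌋₊ := by
  have hb := beta_nonneg hN
  set a := t * ((N:ℝ)^2/2) with hadef
  set b := t * ((N:ℝ)^2/2 + dbar*N) with hbdef
  have ha0 : 0 ≤ a := by positivity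
  have hb0 : 0 ≤ b := mul_nonneg ht hb
  set Ea := NormedSpace.exp (a • shiftMat N 1) with hEa
  set Eb := NormedSpace.exp (b • shiftMat N (-1)) with hEb
  set c := Real.exp (-((N:ℝ)^2 + dbar * N) * t) with hc
  have hentry : ∀ x' y : ZMod N, NormedSpace.exp (t • genMat N dbar) x' y
      = c * ∑ z : ZMod N, Ea x' z * Eb z y := by
    intro x' y
    rw [exp_genMat_eq, Matrix.smul_apply, Matrix.mul_apply, smul_eq_mul]
  calc ∑ y : ZMod N, |NormedSpace.exp (t • genMat N dbar) (x+1) y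
        - NormedSpace.exp (t • genMat N dbar) x y|
      = ∑ y : ZMod N, c * |∑ z : ZMod N, (Ea (x+1) z - Ea x z) * Eb z y| := by
        apply Finset.sum_congr rfl
        intro y _
        rw [hentry, hentry, ← mul_sub, abs_mul, abs_of_pos (Real.exp_pos _), ← Finset.sum_sub_distrib]
        congr 2
        apply Finset.sum_congr rfl
        intro z _
        ring
  _ ≤ ∑ y : ZMod N, c * ∑ z : ZMod N, |Ea (x+1) z - Ea x z| * Eb z y := by
        apply Finset.sum_le_sum
        intro y _
        apply mul_le_mul_of_nonneg_left _ (Real.exp_pos _).le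
        calc |∑ z : ZMod N, (Ea (x+1) z - Ea x z) * Eb z y|
            ≤ ∑ z : ZMod N, |(Ea (x+1) z - Ea x z) * Eb z y| :=
              Finset.abs_sum_le_sum_abs _ _
        _ = ∑ z : ZMod N, |Ea (x+1) z - Ea x z| * Eb z y := by
              apply Finset.sum_congr rfl
              intro z _
              rw [abs_mul, abs_of_nonneg (exp_shift_nonneg hb0 _ _ _)]
  _ = c * ∑ z : ZMod N, |Ea (x+1) z - Ea x z| * Real.exp b := by
        rw [← Finset.mul_sum, Finset.sum_comm]
        congr 1
        apply Finset.sum_congr rfl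
        intro z _
        rw [← Finset.mul_sum, exp_shift_rowsum hb0]
  _ ≤ c * (2 * pw a ⌊a⌋₊ * Real.exp b) := by
        apply mul_le_mul_of_nonneg_left _ (Real.exp_pos _).le
        rw [← Finset.sum_mul]
        exact mul_le_mul_of_nonneg_right (exp_shift_delta_row ha0 x) (Real.exp_pos _).le
  _ = 2 * Real.exp (-a) * pw a ⌊a⌋₊ := by
        have h2 : Real.exp (-((N:ℝ)^2 + dbar * N) * t) * Real.exp b = Real.exp (-a) := by
          rw [← Real.exp_add]
          congr 1
          rw [hbdef, hadef]
          ring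
        calc c * (2 * pw a ⌊a⌋₊ * Real.exp b)
            = (Real.exp (-((N:ℝ)^2 + dbar * N) * t) * Real.exp b) * (2 * pw a ⌊a⌋₊) := by
              rw [hc]; ring
        _ = 2 * Real.exp (-a) * pw a ⌊a⌋₊ := by rw [h2]; ring
end F
section G
variable {N : ℕ} [NeZero N]

lemma Npos : (0:ℝ) < (N:ℝ) := by
  exact_mod_cast Nat.pos_of_ne_zero (NeZero.ne N)

lemma step_bound_sqrt {dbar t : ℝ} (hN : 2 * |dbar| ≤ (N:ℝ)) (ht : 0 < t) (x : ZMod N) :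
    ∑ y : ZMod N, |NormedSpace.exp (t • genMat N dbar) (x+1) y
        - NormedSpace.exp (t • genMat N dbar) x y|
      ≤ 4 / ((N:ℝ) * Real.sqrt t) := by
  have hNpos : (0:ℝ) < (N:ℝ) := Npos
  set a := t * ((N:ℝ)^2/2) with hadef
  have ha : 0 < a := by positivity
  have h22 : Real.sqrt 2 * Real.sqrt 2 = 2 := Real.mul_self_sqrt (by norm_num)
  have hsqrt2 : (0:ℝ) < Real.sqrt 2 := Real.sqrt_pos.mpr (by norm_num)
  have hsqrta : Real.sqrt a = Real.sqrt t * ((N:ℝ) / Real.sqrt 2) := by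
    rw [hadef, Real.sqrt_mul ht.le]
    congr 1
    rw [show (N:ℝ)^2/2 = ((N:ℝ)/Real.sqrt 2)^2 by
      rw [div_pow, Real.sq_sqrt (by norm_num : (0:ℝ) ≤ 2)]]
    exact Real.sqrt_sq (by positivity)
  calc ∑ y : ZMod N, |NormedSpace.exp (t • genMat N dbar) (x+1) y
        - NormedSpace.exp (t • genMat N dbar) x y|
      ≤ 2 * Real.exp (-a) * pw a ⌊a⌋₊ := step_bound hN ht.le x
  _ = 2 * (Real.exp (-a) * pw a ⌊a⌋₊) := by ring
  _ ≤ 2 * (Real.sqrt 2 / Real.sqrt a) := by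
      apply mul_le_mul_of_nonneg_left (poisson_max ha) (by norm_num)
  _ = 4 / ((N:ℝ) * Real.sqrt t) := by
      rw [hsqrta]
      have hst : (0:ℝ) < Real.sqrt t := Real.sqrt_pos.mpr ht
      rw [mul_comm 2 (Real.sqrt 2 / (Real.sqrt t * ((N:ℝ) / Real.sqrt 2))), div_mul_eq_mul_div,
        div_eq_div_iff (by positivity) (by positivity)]
      field_simp
      linear_combination 2 * h22

lemma tele_bound {dbar t B : ℝ}
    (hstep : ∀ x : ZMod N, ∑ y : ZMod N, |NormedSpace.exp (t • genMat N dbar) (x+1) y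
        - NormedSpace.exp (t • genMat N dbar) x y| ≤ B) :
    ∀ (n : ℕ) (x : ZMod N), ∑ y : ZMod N, |NormedSpace.exp (t • genMat N dbar) (x + (n:ZMod N)) y
        - NormedSpace.exp (t • genMat N dbar) x y| ≤ n * B := by
  intro n
  induction n with
  | zero => intro x; simp
  | succ n ih =>
    intro x
    have h1 : (((n+1 : ℕ)):ZMod N) = (n : ZMod N) + 1 := by push_cast; ring
    calc ∑ y : ZMod N, |NormedSpace.exp (t • genMat N dbar) (x + ((n+1:ℕ):ZMod N)) y
          - NormedSpace.exp (t • genMat N dbar) x y|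
        ≤ ∑ y : ZMod N, (|NormedSpace.exp (t • genMat N dbar) ((x + (n:ZMod N)) + 1) y
            - NormedSpace.exp (t • genMat N dbar) (x + (n:ZMod N)) y|
          + |NormedSpace.exp (t • genMat N dbar) (x + (n:ZMod N)) y
            - NormedSpace.exp (t • genMat N dbar) x y|) := by
          apply Finset.sum_le_sum
          intro y _
          rw [h1, show x + ((n:ZMod N) + 1) = (x + (n:ZMod N)) + 1 by ring]
          exact abs_sub_le _ _ _
    _ = (∑ y : ZMod N, |NormedSpace.exp (t • genMat N dbar) ((x + (n:ZMod N)) + 1) y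
            - NormedSpace.exp (t • genMat N dbar) (x + (n:ZMod N)) y|)
        + ∑ y : ZMod N, |NormedSpace.exp (t • genMat N dbar) (x + (n:ZMod N)) y
            - NormedSpace.exp (t • genMat N dbar) x y| := Finset.sum_add_distrib
    _ ≤ B + n * B := add_le_add (hstep _) (ih x)
    _ = ((n+1:ℕ):ℝ) * B := by push_cast; ring

lemma grad_bound_int {dbar t : ℝ} (hN : 2 * |dbar| ≤ (N:ℝ)) (ht : 0 < t) (x : ZMod N) (ℓ : ℤ) :
    ∑ y : ZMod N, |NormedSpace.exp (t • genMat N dbar) (x + (ℓ:ZMod N)) y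
        - NormedSpace.exp (t • genMat N dbar) x y|
      ≤ |(ℓ:ℝ)| * (4 / ((N:ℝ) * Real.sqrt t)) := by
  have htele := tele_bound (fun x' => step_bound_sqrt hN ht x')
  rcases le_or_gt 0 ℓ with hl | hl
  · have h1 : ((ℓ:ZMod N)) = ((ℓ.toNat : ℕ) : ZMod N) := by
      rw [← Int.cast_natCast, Int.toNat_of_nonneg hl]
    have h2 : (ℓ.toNat : ℝ) = |(ℓ:ℝ)| := by
      rw [abs_of_nonneg (by exact_mod_cast hl)]
      exact_mod_cast congrArg (Int.cast : ℤ → ℝ) (Int.toNat_of_nonneg hl)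
    rw [h1, ← h2]
    exact htele ℓ.toNat x
  · set x' := x + (ℓ:ZMod N) with hx'
    have h1 : x = x' + (((-ℓ).toNat : ℕ) : ZMod N) := by
      rw [hx', ← Int.cast_natCast, Int.toNat_of_nonneg (by omega : 0 ≤ -ℓ)]
      push_cast
      ring
    have h2 : ((-ℓ).toNat : ℝ) = |(ℓ:ℝ)| := by
      rw [abs_of_neg (by exact_mod_cast hl)]
      exact_mod_cast congrArg (Int.cast : ℤ → ℝ) (Int.toNat_of_nonneg (by omega : 0 ≤ -ℓ))
    calc ∑ y : ZMod N, |NormedSpace.exp (t • genMat N dbar) (x + (ℓ:ZMod N)) y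
          - NormedSpace.exp (t • genMat N dbar) x y|
        = ∑ y : ZMod N, |NormedSpace.exp (t • genMat N dbar) (x' + (((-ℓ).toNat : ℕ) : ZMod N)) y
          - NormedSpace.exp (t • genMat N dbar) x' y| := by
          apply Finset.sum_congr rfl
          intro y _
          rw [← hx', ← h1, abs_sub_comm]
    _ ≤ ((-ℓ).toNat : ℝ) * (4 / ((N:ℝ) * Real.sqrt t)) := htele _ x'
    _ = |(ℓ:ℝ)| * (4 / ((N:ℝ) * Real.sqrt t)) := by rw [h2]
end G
section H
variable {N : ℕ} [NeZero N]

lemma heat_cont (dbar T : ℝ) (x y : ZMod N) :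
    Continuous fun S : ℝ => NormedSpace.exp ((T - S) • genMat N dbar) x y := by
  letI : SeminormedRing (Matrix (ZMod N) (ZMod N) ℝ) := Matrix.linftyOpSemiNormedRing
  letI : NormedRing (Matrix (ZMod N) (ZMod N) ℝ) := Matrix.linftyOpNormedRing
  letI : NormedAlgebra ℝ (Matrix (ZMod N) (ZMod N) ℝ) := Matrix.linftyOpNormedAlgebra
  letI : NormedAlgebra ℚ (Matrix (ZMod N) (ZMod N) ℝ) := Matrix.linftyOpNormedAlgebra
  have h1 : Continuous fun S : ℝ => (T - S) • genMat N dbar :=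
    (continuous_const.sub continuous_id).smul continuous_const
  have h2 : Continuous fun S : ℝ => NormedSpace.exp ((T - S) • genMat N dbar) :=
    NormedSpace.exp_continuous.comp h1
  exact (continuous_apply y).comp ((continuous_apply x).comp h2)
end H

section I
variable {N : ℕ} [NeZero N]

lemma integrand_integrable {dbar : ℝ} (hN : 2 * |dbar| ≤ (N:ℝ)) {ψ : ℝ → ZMod N → ℝ}
    (hm : ∀ y : ZMod N, Measurable fun s => ψ s y) {Bψ : ℝ}
    (hb : ∀ S ∈ Set.Icc (0:ℝ) 1, ∀ y : ZMod N, |ψ S y| ≤ Bψ)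
    {S₀ T : ℝ} (h0 : 0 ≤ S₀) (hST : S₀ ≤ T) (hT1 : T ≤ 1) (z : ZMod N) :
    IntervalIntegrable (fun S => ∑ y : ZMod N, heatKer N dbar S T z y * ψ S y)
      volume S₀ T := by
  rw [intervalIntegrable_iff]
  have hmeas : Measurable fun S => ∑ y : ZMod N, heatKer N dbar S T z y * ψ S y := by
    apply Finset.measurable_sum
    intro y _
    exact ((heat_cont dbar T z y).measurable).mul (hm y)
  apply MeasureTheory.Measure.integrableOn_of_bounded (M := Bψ)
  · rw [Set.uIoc_of_le hST]
    exact (measure_Ioc_lt_top).ne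
  · exact hmeas.aestronglyMeasurable
  · apply (MeasureTheory.ae_restrict_mem measurableSet_uIoc).mono
    intro S hS
    rw [Set.uIoc_of_le hST] at hS
    have hS0 : (0:ℝ) ≤ S := le_trans h0 hS.1.le
    have hS1 : S ≤ 1 := le_trans hS.2 hT1
    have ht : 0 ≤ T - S := by linarith [hS.2]
    have hHpos : ∀ y : ZMod N, 0 ≤ heatKer N dbar S T z y :=
      fun y => heat_entry_nonneg hN ht z y
    have hrow : ∑ y : ZMod N, heatKer N dbar S T z y = 1 := heat_rowsum_one hN ht z
    calc ‖∑ y : ZMod N, heatKer N dbar S T z y * ψ S y‖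
        ≤ ∑ y : ZMod N, |heatKer N dbar S T z y * ψ S y| := Finset.abs_sum_le_sum_abs _ _
    _ ≤ ∑ y : ZMod N, heatKer N dbar S T z y * Bψ := by
        apply Finset.sum_le_sum
        intro y _
        rw [abs_mul, abs_of_nonneg (hHpos y)]
        exact mul_le_mul_of_nonneg_left (hb S ⟨hS0, hS1⟩ y) (hHpos y)
    _ = Bψ := by rw [← Finset.sum_mul, hrow, one_mul]
end I

/-- normalized maximal spatial gradient (over `1 ≤ |ℓ| ≤ N^{1/2+ε_RN}`, acting on
the forward spatial variable) of the short-time heat operator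
`G(T,x) = ∫_{max(T−N^{−1/2−999ε_RN},0)}^{T} Σ_y H^N_{S,T,x,y} N^{1/2} φ(S,y) Y(S,y) dS`
is bounded by `C N^{−3/4−(999/2)ε_RN+ε_ap}`. -/
theorem stmt_14 (dbar : ℝ) :
    ∃ C : ℝ, ∀ (N : ℕ) [NeZero N], 2 * |dbar| ≤ (N : ℝ) →
      ∀ εap : ℝ, 0 < εap → εap ≤ ((999 : ℝ) ^ (999 : ℕ))⁻¹ * epsRN →
      ∀ φ Y : ℝ → ZMod N → ℝ,
        (∀ y : ZMod N, Measurable fun s => φ s y) →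
        (∀ y : ZMod N, Measurable fun s => Y s y) →
        (∀ s ∈ Set.Icc (0:ℝ) 1, ∀ y : ZMod N, |φ s y| ≤ 1) →
        (∀ s ∈ Set.Icc (0:ℝ) 1, ∀ y : ZMod N, |Y s y| ≤ (N : ℝ) ^ εap) →
      ∀ T ∈ Set.Icc (0:ℝ) 1, ∀ x : ZMod N,
      ∀ ℓ : ℤ, 1 ≤ |ℓ| → |(ℓ : ℝ)| ≤ (N : ℝ) ^ ((1:ℝ)/2 + epsRN) →
        |(ℓ : ℝ)|⁻¹ *
          |(∫ S in (max (T - (N : ℝ) ^ (-(1:ℝ)/2 - 999 * epsRN)) 0)..T,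
              ∑ y : ZMod N, heatKer N dbar S T (x + (ℓ : ZMod N)) y *
                ((N : ℝ) ^ ((1:ℝ)/2) * φ S y * Y S y))
            - (∫ S in (max (T - (N : ℝ) ^ (-(1:ℝ)/2 - 999 * epsRN)) 0)..T,
              ∑ y : ZMod N, heatKer N dbar S T x y *
                ((N : ℝ) ^ ((1:ℝ)/2) * φ S y * Y S y))|
          ≤ C * (N : ℝ) ^ (-(3:ℝ)/4 - 999/2 * epsRN + εap) := by
  use 8
  intro N instN hN εap hε0 hεle φ Y hφm hYm hφb hYb T hT x ℓ hℓ1 hℓle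
  have hN0 : (0:ℝ) < N := Npos
  have hT0 : 0 ≤ T := hT.1
  have hT1 : T ≤ 1 := hT.2
  set len := (N : ℝ) ^ (-(1:ℝ)/2 - 999 * epsRN) with hlen
  set S₀ := max (T - len) 0 with hS0def
  have hlenpos : 0 < len := Real.rpow_pos_of_pos hN0 _
  have hS00 : 0 ≤ S₀ := le_max_right _ _
  have hS0T : S₀ ≤ T := max_le (by linarith) hT0
  have hTS0len : T - S₀ ≤ len := by
    have h := le_max_left (T - len) 0
    rw [← hS0def] at h
    linarith
  set ψ : ℝ → ZMod N → ℝ := fun S y => (N:ℝ)^((1:ℝ)/2) * φ S y * Y S y with hψdef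
  set Bψ := (N:ℝ)^((1:ℝ)/2) * (N:ℝ)^εap with hBψ
  have hBψ0 : 0 ≤ Bψ := by
    rw [hBψ]; positivity
  have hψm : ∀ y : ZMod N, Measurable fun s => ψ s y :=
    fun y => (measurable_const.mul (hφm y)).mul (hYm y)
  have hψb : ∀ S ∈ Set.Icc (0:ℝ) 1, ∀ y : ZMod N, |ψ S y| ≤ Bψ := by
    intro S hS y
    rw [hψdef, hBψ]
    simp only
    rw [abs_mul, abs_mul, abs_of_nonneg (Real.rpow_nonneg hN0.le _), mul_assoc]
    apply mul_le_mul_of_nonneg_left _ (Real.rpow_nonneg hN0.le _)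
    calc |φ S y| * |Y S y| ≤ 1 * ((N:ℝ)^εap) :=
      mul_le_mul (hφb S hS y) (hYb S hS y) (abs_nonneg _) zero_le_one
    _ = (N:ℝ)^εap := one_mul _
  have hint1 := integrand_integrable hN hψm hψb hS00 hS0T hT1 (x + (ℓ:ZMod N))
  have hint2 := integrand_integrable hN hψm hψb hS00 hS0T hT1 x
  rw [← intervalIntegral.integral_sub hint1 hint2]
  set c1 := |(ℓ:ℝ)| * (4/(N:ℝ)) * Bψ with hc1def
  have hc1 : 0 ≤ c1 := by
    rw [hc1def]
    have := abs_nonneg ((ℓ:ℝ))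
    positivity
  -- pointwise bound
  have hbound : ∀ᵐ S ∂(volume.restrict (Set.uIoc S₀ T)),
      ‖(∑ y : ZMod N, heatKer N dbar S T (x + (ℓ:ZMod N)) y * ψ S y)
        - ∑ y : ZMod N, heatKer N dbar S T x y * ψ S y‖ ≤ c1 * (T - S)^(-(1:ℝ)/2) := by
    have hne : ∀ᵐ S : ℝ ∂volume, S ∈ ({T} : Set ℝ)ᶜ :=
      compl_mem_ae_iff.mpr (measure_singleton T)
    apply ((MeasureTheory.ae_restrict_mem measurableSet_uIoc).and
      (MeasureTheory.ae_restrict_of_ae hne)).mono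
    rintro S ⟨hS, hSne⟩
    rw [Set.uIoc_of_le hS0T] at hS
    have hST : S < T := lt_of_le_of_ne hS.2 (by simpa using hSne)
    have ht : 0 < T - S := by linarith
    have hS0' : (0:ℝ) ≤ S := le_trans hS00 hS.1.le
    have hS1 : S ≤ 1 := le_trans hS.2 hT1
    have hrpow : (T - S) ^ (-(1:ℝ)/2) = (Real.sqrt (T - S))⁻¹ := by
      rw [Real.sqrt_eq_rpow, show (-(1:ℝ)/2) = -(1/2 : ℝ) by ring, Real.rpow_neg ht.le]
    have hgrad := grad_bound_int (t := T - S) hN ht x ℓ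
    calc ‖(∑ y : ZMod N, heatKer N dbar S T (x + (ℓ:ZMod N)) y * ψ S y)
          - ∑ y : ZMod N, heatKer N dbar S T x y * ψ S y‖
        = |∑ y : ZMod N, (heatKer N dbar S T (x + (ℓ:ZMod N)) y
            - heatKer N dbar S T x y) * ψ S y| := by
          rw [Real.norm_eq_abs, ← Finset.sum_sub_distrib]
          congr 1
          apply Finset.sum_congr rfl
          intro y _
          ring
    _ ≤ ∑ y : ZMod N, |heatKer N dbar S T (x + (ℓ:ZMod N)) y - heatKer N dbar S T x y|
          * Bψ := by
          calc |∑ y : ZMod N, (heatKer N dbar S T (x + (ℓ:ZMod N)) y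
              - heatKer N dbar S T x y) * ψ S y|
              ≤ ∑ y : ZMod N, |(heatKer N dbar S T (x + (ℓ:ZMod N)) y
                - heatKer N dbar S T x y) * ψ S y| := Finset.abs_sum_le_sum_abs _ _
          _ ≤ ∑ y : ZMod N, |heatKer N dbar S T (x + (ℓ:ZMod N)) y
                - heatKer N dbar S T x y| * Bψ := by
                apply Finset.sum_le_sum
                intro y _
                rw [abs_mul]
                exact mul_le_mul_of_nonneg_left (hψb S ⟨hS0', hS1⟩ y) (abs_nonneg _)
    _ = (∑ y : ZMod N, |heatKer N dbar S T (x + (ℓ:ZMod N)) y - heatKer N dbar S T x y|)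
          * Bψ := by rw [Finset.sum_mul]
    _ ≤ (|(ℓ:ℝ)| * (4 / ((N:ℝ) * Real.sqrt (T - S)))) * Bψ :=
          mul_le_mul_of_nonneg_right hgrad hBψ0
    _ = c1 * (T - S)^(-(1:ℝ)/2) := by
          rw [hrpow, hc1def, div_mul_eq_div_div, div_eq_mul_inv ((4:ℝ)/(N:ℝ))]
          ring
  have hgint : IntervalIntegrable (fun S => c1 * (T - S)^(-(1:ℝ)/2)) volume S₀ T := by
    have h1 : IntervalIntegrable (fun u : ℝ => u ^ (-(1:ℝ)/2)) volume 0 (T - S₀) :=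
      intervalIntegral.intervalIntegrable_rpow' (by norm_num)
    have h2 := h1.comp_sub_left T
    rw [show T - (T - S₀) = S₀ by ring, show T - 0 = T by ring] at h2
    exact (h2.const_mul c1).symm
  have hmain := intervalIntegral.norm_integral_le_of_norm_le hS0T
    (by rw [Set.uIoc_of_le hS0T] at hbound; exact (ae_restrict_iff' measurableSet_Ioc).mp hbound) hgint
  have hval : (∫ S in S₀..T, c1 * (T - S)^(-(1:ℝ)/2)) = c1 * (2 * (T - S₀)^((1:ℝ)/2)) := by
    rw [intervalIntegral.integral_const_mul]
    congr 1
    rw [intervalIntegral.integral_comp_sub_left (fun u : ℝ => u ^ (-(1:ℝ)/2)) T]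
    rw [show T - T = (0:ℝ) by ring]
    rw [integral_rpow (Or.inl (by norm_num))]
    rw [Real.zero_rpow (by norm_num)]
    norm_num
    ring
  rw [hval] at hmain
  -- conclude
  have hl1 : (1:ℝ) ≤ |(ℓ:ℝ)| := by
    rw [← Int.cast_abs]
    exact_mod_cast hℓ1
  have hlpos : (0:ℝ) < |(ℓ:ℝ)| := lt_of_lt_of_le one_pos hl1
  have hrpowmono : (T - S₀) ^ ((1:ℝ)/2) ≤ len ^ ((1:ℝ)/2) :=
    Real.rpow_le_rpow (by linarith) hTS0len (by norm_num)
  calc |(ℓ:ℝ)|⁻¹ * |(∫ S in S₀..T,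
        ((∑ y : ZMod N, heatKer N dbar S T (x + (ℓ:ZMod N)) y * ψ S y)
        - ∑ y : ZMod N, heatKer N dbar S T x y * ψ S y))|
      ≤ |(ℓ:ℝ)|⁻¹ * (c1 * (2 * (T - S₀)^((1:ℝ)/2))) := by
        apply mul_le_mul_of_nonneg_left _ (by positivity)
        exact hmain
  _ ≤ |(ℓ:ℝ)|⁻¹ * (c1 * (2 * len^((1:ℝ)/2))) := by
        apply mul_le_mul_of_nonneg_left _ (by positivity)
        apply mul_le_mul_of_nonneg_left _ hc1
        apply mul_le_mul_of_nonneg_left hrpowmono (by norm_num)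
  _ = (|(ℓ:ℝ)|⁻¹ * |(ℓ:ℝ)|) * ((4/(N:ℝ)) * Bψ * (2 * len^((1:ℝ)/2))) := by
        rw [hc1def]; ring
  _ = 8 * ((N:ℝ)^(-(1:ℝ)) * ((N:ℝ)^((1:ℝ)/2) * (N:ℝ)^εap
        * (N:ℝ)^((-(1:ℝ)/2 - 999 * epsRN) * ((1:ℝ)/2)))) := by
        rw [inv_mul_cancel₀ (ne_of_gt hlpos), one_mul, hBψ, hlen,
          ← Real.rpow_mul hN0.le, Real.rpow_neg_one]
        field_simp
        ring
  _ = 8 * (N:ℝ)^(-(3:ℝ)/4 - 999/2 * epsRN + εap) := by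
        rw [← Real.rpow_add hN0, ← Real.rpow_add hN0, ← Real.rpow_add hN0]
        congr 1
        ring
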